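/- The natural map Aut M → Sym(M⁻), restricting an automorphism to the set M⁻ of elements of maximal order, is an injective group homomorphism. -/

import Mathlib

open AddMonoid

section Aux

variable {M : Type*} [AddCommGroup M] [Fintype M]

/-- elements whose order attains the full power of `p` in the exponent lie in the closure of
the set of maximal-order elements. -/
private lemma mem_closure_of_full_p_part {g : M} (hg : addOrderOf g = exponent M)
    {p : ℕ} (hp : p.Prime) {x : M}
    (hx : addOrderOf x = p ^ (exponent M).factorization p) :
    x ∈ AddSubgroup.closure {y : M | addOrderOf y = exponent M} := by
  set m := exponent M with hm
  have hm0 : m ≠ 0 := AddMonoid.exponent_ne_zero_of_finite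
  set a := m.factorization p with ha
  -- g' has order the p'-part of m
  set g' : M := (p ^ a) • g with hg'
  have hdvd : p ^ a ∣ m := Nat.ordProj_dvd m p
  have hord_g' : addOrderOf g' = m / p ^ a := by
    rw [hg', addOrderOf_nsmul, hg, Nat.gcd_eq_right hdvd]
  have hcop : (p ^ a).Coprime (m / p ^ a) :=
    Nat.Coprime.pow_left _ (Nat.coprime_ordCompl hp hm0)
  have hsum : addOrderOf (x + g') = m := by
    rw [(AddCommute.all x g').addOrderOf_add_eq_mul_addOrderOf_of_coprime
        (by rw [hx, hord_g']; exact hcop), hx, hord_g']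
    exact Nat.mul_div_cancel' hdvd
  have hxg : x + g' ∈ AddSubgroup.closure {y : M | addOrderOf y = exponent M} :=
    AddSubgroup.subset_closure hsum
  have hgmem : g ∈ AddSubgroup.closure {y : M | addOrderOf y = exponent M} :=
    AddSubgroup.subset_closure hg
  have : x = (x + g') - (p ^ a) • g := by rw [hg']; abel
  rw [this]
  exact sub_mem hxg (AddSubgroup.nsmul_mem _ hgmem _)

/-- elements of prime-power order lie in the closure. -/
private lemma mem_closure_of_prime_pow {g : M} (hg : addOrderOf g = exponent M)
    {p : ℕ} (hp : p.Prime) {c : ℕ} {x : M} (hx : addOrderOf x = p ^ c) :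
    x ∈ AddSubgroup.closure {y : M | addOrderOf y = exponent M} := by
  set m := exponent M with hm
  have hm0 : m ≠ 0 := AddMonoid.exponent_ne_zero_of_finite
  set a := m.factorization p with ha
  have hdvdm : addOrderOf x ∣ m := AddMonoid.addOrder_dvd_exponent x
  have hca : c ≤ a := by
    rw [hx] at hdvdm
    exact (Nat.Prime.pow_dvd_iff_le_factorization hp hm0).mp hdvdm
  rcases eq_or_lt_of_le hca with hca' | hca'
  · exact mem_closure_of_full_p_part hg hp (by rw [hx, hca'])
  · -- add the p-part of g to boost the order to p^a
    set gp : M := (m / p ^ a) • g with hgp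
    have hdvd : p ^ a ∣ m := Nat.ordProj_dvd m p
    have hdvd' : m / p ^ a ∣ m := Nat.div_dvd_of_dvd hdvd
    have hord_gp : addOrderOf gp = p ^ a := by
      rw [hgp, addOrderOf_nsmul, hg, Nat.gcd_eq_right hdvd',
        Nat.div_div_self hdvd hm0]
    have hxa : (p ^ a) • x = 0 :=
      addOrderOf_dvd_iff_nsmul_eq_zero.mp (hx ▸ pow_dvd_pow p hca)
    have hx1 : (p ^ (a - 1)) • x = 0 :=
      addOrderOf_dvd_iff_nsmul_eq_zero.mp
        (hx ▸ pow_dvd_pow p (Nat.le_sub_one_of_lt hca'))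
    have hyord : addOrderOf (x + gp) = p ^ a := by
      have hdvd2 : addOrderOf (x + gp) ∣ p ^ a := by
        apply addOrderOf_dvd_of_nsmul_eq_zero
        rw [smul_add, hxa, zero_add, ← hord_gp, addOrderOf_nsmul_eq_zero]
      obtain ⟨b, hb, hb2⟩ := (Nat.dvd_prime_pow hp).mp hdvd2
      rcases eq_or_lt_of_le hb with hb' | hb'
      · rw [hb2, hb']
      · exfalso
        have hble : b ≤ a - 1 := Nat.le_sub_one_of_lt hb'
        have h0 : (p ^ (a - 1)) • (x + gp) = 0 :=
          addOrderOf_dvd_iff_nsmul_eq_zero.mp (hb2 ▸ pow_dvd_pow p hble)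
        rw [smul_add, hx1, zero_add] at h0
        have : addOrderOf gp ∣ p ^ (a - 1) := addOrderOf_dvd_of_nsmul_eq_zero h0
        rw [hord_gp] at this
        have := Nat.le_of_dvd (pow_pos hp.pos _) this
        have h1 : a ≤ a - 1 := (Nat.pow_le_pow_iff_right hp.one_lt).mp this
        omega
    have hy : x + gp ∈ AddSubgroup.closure {y : M | addOrderOf y = exponent M} :=
      mem_closure_of_full_p_part hg hp (by rw [hyord])
    have hgmem : g ∈ AddSubgroup.closure {y : M | addOrderOf y = exponent M} :=
      AddSubgroup.subset_closure hg
    have : x = (x + gp) - (m / p ^ a) • g := by rw [hgp]; abel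
    rw [this]
    exact sub_mem hy (AddSubgroup.nsmul_mem _ hgmem _)

/-- The set of elements of maximal order generates a finite abelian group. -/
private lemma closure_maxOrder_eq_top :
    AddSubgroup.closure {y : M | addOrderOf y = exponent M} = ⊤ := by
  obtain ⟨g, hg⟩ := AddMonoid.exists_addOrderOf_eq_exponent
    (AddMonoid.ExponentExists.of_finite (G := M))
  rw [eq_top_iff]
  intro x _
  -- strong induction on the order of x
  suffices H : ∀ n : ℕ, ∀ x : M, addOrderOf x = n →
      x ∈ AddSubgroup.closure {y : M | addOrderOf y = exponent M} from
    H (addOrderOf x) x rfl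
  intro n
  induction n using Nat.strong_induction_on with
  | _ n ih =>
    intro x hx
    have hn0 : n ≠ 0 := by
      rw [← hx]
      exact (addOrderOf_pos x).ne'
    rcases eq_or_ne n 1 with h1 | h1
    · have : x = 0 := by rwa [h1, addOrderOf_eq_one_iff] at hx
      rw [this]; exact zero_mem _
    obtain ⟨p, hp, hpn⟩ := Nat.exists_prime_and_dvd h1
    set c := n.factorization p with hc
    have hc0 : 1 ≤ c := (hp.dvd_iff_one_le_factorization hn0).mp hpn
    set n' := n / p ^ c with hn'
    have hpc_dvd : p ^ c ∣ n := Nat.ordProj_dvd n p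
    have hn'_dvd : n' ∣ n := Nat.div_dvd_of_dvd hpc_dvd
    rcases eq_or_ne n' 1 with hn1 | hn1
    · -- x has prime power order
      have : n = p ^ c := by
        have := Nat.ordProj_mul_ordCompl_eq_self n p
        rw [← hn', hn1, mul_one] at this
        exact this.symm
      exact mem_closure_of_prime_pow hg hp (by rw [hx, this])
    · -- split x into coprime-order pieces using Bezout
      have hcop : (p ^ c).Coprime n' := Nat.Coprime.pow_left _ (Nat.coprime_ordCompl hp hn0)
      set y := n' • x with hy
      set z := (p ^ c) • x with hz
      have hyo : addOrderOf y = p ^ c := by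
        rw [hy, addOrderOf_nsmul, hx, Nat.gcd_eq_right hn'_dvd, hn',
          Nat.div_div_self hpc_dvd hn0]
      have hzo : addOrderOf z = n' := by
        rw [hz, addOrderOf_nsmul, hx, Nat.gcd_eq_right hpc_dvd]
      have hyc : p ^ c < n := by
        rcases Nat.lt_or_ge (p ^ c) n with h | h
        · exact h
        · exfalso
          have := Nat.le_of_dvd (Nat.pos_of_ne_zero hn0) hpc_dvd
          have hpc : p ^ c = n := le_antisymm this h
          apply hn1
          rw [hn', hpc, Nat.div_self (Nat.pos_of_ne_zero hn0)]
      have hzc : n' < n :=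
        lt_of_le_of_ne (Nat.le_of_dvd (Nat.pos_of_ne_zero hn0) hn'_dvd)
          (by
            intro h
            have h2 := Nat.div_mul_cancel hpc_dvd
            rw [show n / p ^ c = n' from rfl, h] at h2
            nlinarith [Nat.one_lt_pow (by omega : c ≠ 0) hp.one_lt,
              Nat.pos_of_ne_zero hn0])
      have hyH := ih _ hyc y hyo
      have hzH := ih _ hzc z hzo
      -- Bezout
      have hb := Nat.gcd_eq_gcd_ab (p ^ c) n'
      rw [hcop.gcd_eq_one] at hb
      have hb2 : ((p ^ c : ℕ) : ℤ) * Nat.gcdA (p ^ c) n' + (n' : ℤ) * Nat.gcdB (p ^ c) n' = 1 := by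
        exact_mod_cast hb.symm
      have hxe : x = (Nat.gcdA (p ^ c) n') • z + (Nat.gcdB (p ^ c) n') • y :=
        calc x = (((p ^ c : ℕ) : ℤ) * Nat.gcdA (p ^ c) n' + (n' : ℤ) * Nat.gcdB (p ^ c) n') • x := by
              rw [hb2, one_smul]
          _ = _ := by
              rw [add_smul, mul_comm, mul_comm ((n' : ℤ)) _, mul_smul, mul_smul,
                natCast_zsmul, natCast_zsmul, hy, hz]
      rw [hxe]
      exact add_mem (AddSubgroup.zsmul_mem _ hzH _) (AddSubgroup.zsmul_mem _ hyH _)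

end Aux

/-- for a finite abelian group `M`, restriction of automorphisms to the set
`M⁻` of elements of maximal order is an injective group homomorphism
`Aut M → Sym (M⁻)`. -/
theorem stmt7 (M : Type*) [AddCommGroup M] [Fintype M] :
    ∃ f : Multiplicative (AddAut M) →* Equiv.Perm {x : M // addOrderOf x = AddMonoid.exponent M},
      Function.Injective f ∧
      ∀ (a : AddAut M) (x : {x : M // addOrderOf x = AddMonoid.exponent M}),
        ((f (Multiplicative.ofAdd a) x : {x : M // addOrderOf x = AddMonoid.exponent M}) : M) = a (x : M) := by
  have key : ∀ (a : AddAut M) (x : M), addOrderOf (a x) = addOrderOf x := fun a x =>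
    addOrderOf_injective a.toAddMonoidHom a.injective x
  set S : Set M := {x : M | addOrderOf x = AddMonoid.exponent M} with hS
  let toPerm : AddAut M → Equiv.Perm {x : M // addOrderOf x = AddMonoid.exponent M} :=
    fun a =>
      { toFun := fun x => ⟨a x, by rw [key]; exact x.2⟩
        invFun := fun x => ⟨a.symm x, by
          have := key a (a.symm (x : M))
          rw [a.apply_symm_apply] at this
          rw [this.symm]; exact x.2⟩
        left_inv := fun x => by simp
        right_inv := fun x => by simp }
  refine ⟨{ toFun := toPerm
            map_one' := by ext x; rfl
            map_mul' := fun a b => by ext x; rfl }, ?_, fun a x => rfl⟩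
  intro a b hab
  have hab' : toPerm a = toPerm b := hab
  have hfix : ∀ x : M, addOrderOf x = AddMonoid.exponent M → a x = b x := by
    intro x hx
    have h4 := Equiv.congr_fun hab' ⟨x, hx⟩
    exact congrArg Subtype.val h4
  have : ∀ x : M, a x = b x := by
    intro x
    have hx : x ∈ AddSubgroup.closure S := by
      rw [closure_maxOrder_eq_top]; trivial
    induction hx using AddSubgroup.closure_induction with
    | mem y hy => exact hfix y hy
    | zero => simp
    | add y z _ _ hy hz => simp [map_add, hy, hz]
    | neg y _ hy => simp [map_neg, hy]
  ext x
  exact this x
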